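/- Let α > 0 and let X be a non-negative absolutely continuous random variable with cumulative distribution function F, differentiable on (0, +∞) with derivative f, satisfying 0 < F(x) < 1 for all x > 0 and lim_{x→0⁺} F(x) = 0. Then for every x ∈ (0, +∞) the integral ∫_0^x L̆_α(t)/t dt is finite and F(x) = [1 − exp(−∫_0^x L̆_α(t)/t dt)]^{1/α}, where L̆_α is the α-generalized reversed aging intensity function of X. -/

import Mathlib

/-- The α-generalized reversed aging intensity function. -/
noncomputable def genRAI (F f : ℝ → ℝ) (α x : ℝ) : ℝ :=
  if α = 0 then -(x * f x) / (F x * Real.log (F x))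
  else α * x * F x ^ (α - 1) * f x / (1 - F x ^ α)

/-- For `α > 0`, the cdf `F` of a non-negative absolutely continuous random variable
is recovered from its α-generalized reversed aging intensity: for every `x > 0` the
integral `∫_0^x L̆_α(t)/t dt` is finite and
`F(x) = [1 - exp(-∫_0^x L̆_α(t)/t dt)]^(1/α)`. -/
theorem stmt_6 (α : ℝ) (hα : 0 < α) (F f : ℝ → ℝ)
    (hmono : Monotone F)
    (hd : ∀ x ∈ Set.Ioi (0:ℝ), HasDerivAt F (f x) x)
    (hF : ∀ x ∈ Set.Ioi (0:ℝ), 0 < F x ∧ F x < 1)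
    (hfi : ∀ u v : ℝ, 0 < u → 0 < v → IntervalIntegrable f MeasureTheory.volume u v)
    (hF0 : Filter.Tendsto F (nhdsWithin (0:ℝ) (Set.Ioi 0)) (nhds 0)) :
    ∀ x ∈ Set.Ioi (0:ℝ),
      IntervalIntegrable (fun t => genRAI F f α t / t) MeasureTheory.volume 0 x ∧
      F x = (1 - Real.exp (-∫ t in (0:ℝ)..x, genRAI F f α t / t)) ^ (1/α) := by
  intro x hx
  have hx0 : (0:ℝ) < x := hx
  set G : ℝ → ℝ := fun t => if t ≤ 0 then 0 else -Real.log (1 - F t ^ α) with hGdef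
  -- basic positivity facts
  have hFa_lt : ∀ t ∈ Set.Ioi (0:ℝ), F t ^ α < 1 := fun t ht =>
    Real.rpow_lt_one (hF t ht).1.le (hF t ht).2 hα
  have hFa_pos : ∀ t ∈ Set.Ioi (0:ℝ), 0 < F t ^ α := fun t ht =>
    Real.rpow_pos_of_pos (hF t ht).1 _
  -- f is nonnegative on (0,∞)
  have hfnn : ∀ t ∈ Set.Ioi (0:ℝ), 0 ≤ f t := by
    intro t ht
    have hslope := (hasDerivAt_iff_tendsto_slope.1 (hd t ht))
    refine ge_of_tendsto hslope ?_
    filter_upwards [self_mem_nhdsWithin] with y hy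
    rw [slope_def_field]
    rcases lt_or_gt_of_ne (show y ≠ t from hy) with h | h
    · exact div_nonneg_iff.2 (Or.inr ⟨by linarith [hmono h.le], by linarith⟩)
    · exact div_nonneg (by linarith [hmono h.le]) (by linarith)
  -- G is continuous on [0, x]
  have hGeq : ∀ t ∈ Set.Ioi (0:ℝ), G t = -Real.log (1 - F t ^ α) := by
    intro t ht; simp [hGdef, not_le.2 (Set.mem_Ioi.1 ht)]
  have hcont : ContinuousOn G (Set.Icc 0 x) := by
    intro t ht
    rcases eq_or_lt_of_le ht.1 with h0 | h0
    · -- continuity at 0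
      subst h0
      have h1 : Filter.Tendsto (fun t => F t ^ α) (nhdsWithin 0 (Set.Ioi 0)) (nhds 0) := by
        have hc : ContinuousAt (fun p : ℝ × ℝ => p.1 ^ p.2) (0, α) :=
          Real.continuousAt_rpow (0, α) (Or.inr hα)
        have := hc.tendsto.comp (hF0.prodMk_nhds tendsto_const_nhds)
        simpa [Real.zero_rpow hα.ne', Function.comp_def] using this
      have h2 : Filter.Tendsto G (nhdsWithin 0 (Set.Ioi 0)) (nhds 0) := by
        have hlog : Filter.Tendsto (fun t => -Real.log (1 - F t ^ α))
            (nhdsWithin 0 (Set.Ioi 0)) (nhds 0) := by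
          have hc : ContinuousAt (fun y : ℝ => -Real.log (1 - y)) 0 := by
            have : (1:ℝ) - 0 ≠ 0 := by norm_num
            fun_prop (disch := norm_num)
          have := hc.tendsto.comp h1
          simpa [Function.comp_def] using this
        refine hlog.congr' ?_
        filter_upwards [self_mem_nhdsWithin] with t ht using (hGeq t ht).symm
      have hG0 : G 0 = 0 := by simp [hGdef]
      have h3 : Filter.Tendsto G (nhdsWithin 0 (insert 0 (Set.Ioi 0))) (nhds 0) := by
        rw [nhdsWithin_insert]
        exact Filter.Tendsto.sup (by simpa [hG0] using tendsto_pure_nhds G 0) h2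
      rw [ContinuousWithinAt, hG0]
      refine h3.mono_left (nhdsWithin_mono _ ?_)
      intro y hy
      rcases eq_or_lt_of_le hy.1 with h | h
      · exact Or.inl h.symm
      · exact Or.inr h
    · -- continuity at t > 0
      have : ContinuousAt G t := by
        have hFc : ContinuousAt F t := (hd t h0).continuousAt
        have h1 : ContinuousAt (fun s => -Real.log (1 - F s ^ α)) t := by
          have hne : (1:ℝ) - F t ^ α ≠ 0 := by
            have := hFa_lt t h0; linarith
          have hrc : ContinuousAt (fun s => F s ^ α) t :=
            hFc.rpow continuousAt_const (Or.inl (hF t h0).1.ne')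
          have hsub : ContinuousAt (fun s => 1 - F s ^ α) t := continuousAt_const.sub hrc
          exact (hsub.log hne).neg
        refine h1.congr ?_
        filter_upwards [eventually_gt_nhds h0] with s hs using (hGeq s hs).symm
      exact this.continuousWithinAt
  -- derivative of G on (0, x)
  have hderiv : ∀ t ∈ Set.Ioo (0:ℝ) x, HasDerivAt G (genRAI F f α t / t) t := by
    intro t ht
    have ht0 : (0:ℝ) < t := ht.1
    have hFt := (hF t ht0).1
    have hne : (1:ℝ) - F t ^ α ≠ 0 := by have := hFa_lt t ht0; linarith
    have h1 : HasDerivAt (fun s => F s ^ α) (α * F t ^ (α - 1) * f t) t := by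
      have := (hd t ht0).rpow_const (p := α) (Or.inl hFt.ne')
      convert this using 1; ring
    have h2 : HasDerivAt (fun s => 1 - F s ^ α) (-(α * F t ^ (α - 1) * f t)) t := by
      have := (hasDerivAt_const t (1:ℝ)).sub h1
      simp only [zero_sub] at this
      exact this
    have h3 : HasDerivAt (fun s => -Real.log (1 - F s ^ α))
        (α * F t ^ (α - 1) * f t / (1 - F t ^ α)) t := by
      have := (h2.log hne).neg
      exact this.congr_deriv (by ring)
    have h4 : HasDerivAt G (α * F t ^ (α - 1) * f t / (1 - F t ^ α)) t := by
      refine h3.congr_of_eventuallyEq ?_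
      filter_upwards [eventually_gt_nhds ht0] with s hs using (hGeq s hs)
    convert h4 using 1
    rw [genRAI, if_neg hα.ne']
    field_simp
  -- nonnegativity of the integrand on (0, x)
  have hnn : ∀ t ∈ Set.Ioo (0:ℝ) x, 0 ≤ genRAI F f α t / t := by
    intro t ht
    have ht0 : (0:ℝ) < t := ht.1
    rw [genRAI, if_neg hα.ne']
    have h1 : 0 < 1 - F t ^ α := by have := hFa_lt t ht0; linarith
    have h2 : 0 ≤ α * t * F t ^ (α - 1) * f t := by
      have := Real.rpow_pos_of_pos (hF t ht0).1 (α - 1)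
      have := hfnn t ht0
      positivity
    positivity
  -- integrability
  have hint : MeasureTheory.IntegrableOn (fun t => genRAI F f α t / t)
      (Set.Ioc 0 x) MeasureTheory.volume :=
    intervalIntegral.integrableOn_deriv_of_nonneg hcont hderiv hnn
  have hii : IntervalIntegrable (fun t => genRAI F f α t / t) MeasureTheory.volume 0 x :=
    (intervalIntegrable_iff_integrableOn_Ioc_of_le hx0.le).2 hint
  refine ⟨hii, ?_⟩
  -- compute the integral via FTC
  have hval : (∫ t in (0:ℝ)..x, genRAI F f α t / t) = G x - G 0 :=
    intervalIntegral.integral_eq_sub_of_hasDerivAt_of_le hx0.le hcont hderiv hii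
  have hG0 : G 0 = 0 := by simp [hGdef]
  have hGx : G x = -Real.log (1 - F x ^ α) := hGeq x hx
  rw [hval, hG0, hGx]
  have h1 : 0 < 1 - F x ^ α := by have := hFa_lt x hx; linarith
  rw [sub_zero, neg_neg, Real.exp_log h1]
  have : (1:ℝ) - (1 - F x ^ α) = F x ^ α := by ring
  rw [this, one_div, Real.rpow_rpow_inv (hF x hx).1.le hα.ne']
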